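/- Let Z be a finite set of points in ℙ^m with #Z ≤ 2d+1. If Z fails to impose independent conditions on hypersurfaces of degree d (i.e. h^1(ℐ_Z(d)) > 0), then there exists a line l ⊂ ℙ^m containing at least d+2 points of Z. -/

import Mathlib

open MvPolynomial

/-- The linear form with coefficient vector `v`. -/
noncomputable def linForm {n : ℕ} (v : Fin n → ℂ) : MvPolynomial (Fin n) ℂ :=
  ∑ i, C (v i) * X i

/-- The affine cone version of the degree-`d` Veronese embedding. -/
noncomputable def nu {n : ℕ} (d : ℕ) (p : Projectivization ℂ (Fin n → ℂ)) :
    MvPolynomial (Fin n) ℂ :=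
  linForm p.rep ^ d

noncomputable def Dder {n : ℕ} (φ : Module.Dual ℂ (Fin n → ℂ)) :
    Derivation ℂ (MvPolynomial (Fin n) ℂ) (MvPolynomial (Fin n) ℂ) :=
  ∑ i, φ (Pi.single i 1) • pderiv i

lemma Dder_apply {n : ℕ} (φ : Module.Dual ℂ (Fin n → ℂ)) (f : MvPolynomial (Fin n) ℂ) :
    Dder φ f = ∑ i, φ (Pi.single i 1) • pderiv i f := by
  rw [Dder]
  induction (Finset.univ : Finset (Fin n)) using Finset.induction with
  | empty => simp
  | insert _ _ h ih => simp_all [Finset.sum_insert h]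

lemma Dder_linForm {n : ℕ} (φ : Module.Dual ℂ (Fin n → ℂ)) (v : Fin n → ℂ) :
    Dder φ (linForm v) = C (φ v) := by
  have hv : φ v = ∑ i, v i * φ (Pi.single i 1) := by
    have : v = ∑ i, v i • (Pi.single i 1 : Fin n → ℂ) := by
      ext j; simp [Finset.sum_apply, Pi.single_apply, eq_comm]
    conv_lhs => rw [this]
    rw [map_sum]; simp [mul_comm]
  rw [Dder_apply, linForm, hv, map_sum]
  refine Finset.sum_congr rfl fun i _ => ?_
  rw [map_sum]
  classical
  rw [Finset.sum_eq_single i (by intro b _ hb; simp [pderiv_X, Pi.single_apply, hb, pderiv_C_mul]) (by simp)]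
  simp [pderiv_C_mul, smul_eq_C_mul, mul_comm]

lemma Dder_pow {n : ℕ} (φ : Module.Dual ℂ (Fin n → ℂ)) (v : Fin n → ℂ) (k : ℕ) :
    Dder φ (linForm v ^ (k+1)) = ((k+1 : ℂ) * φ v) • linForm v ^ k := by
  rw [Derivation.leibniz_pow, Dder_linForm]
  rw [smul_eq_C_mul]
  simp only [Nat.add_sub_cancel, smul_eq_mul, nsmul_eq_mul]
  push_cast
  simp only [map_add, map_mul, map_natCast, map_one]
  ring

/-- apply a list of derivations, head first -/
noncomputable def applyList {n : ℕ} : List (Module.Dual ℂ (Fin n → ℂ)) →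
    MvPolynomial (Fin n) ℂ →ₗ[ℂ] MvPolynomial (Fin n) ℂ
  | [] => LinearMap.id
  | φ :: L => (applyList L) ∘ₗ (Dder φ : MvPolynomial (Fin n) ℂ →ₗ[ℂ] MvPolynomial (Fin n) ℂ)

lemma applyList_pow {n : ℕ} (L : List (Module.Dual ℂ (Fin n → ℂ))) (v : Fin n → ℂ) :
    applyList L (linForm v ^ L.length) =
      C (Nat.factorial L.length * (L.map (fun φ => φ v)).prod) := by
  induction L with
  | nil => simp [applyList]
  | cons φ L ih =>
    rw [applyList]
    simp only [LinearMap.comp_apply, List.length_cons]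
    rw [show (Dder φ : MvPolynomial (Fin n) ℂ →ₗ[ℂ] MvPolynomial (Fin n) ℂ) (linForm v ^ (L.length + 1)) = Dder φ (linForm v ^ (L.length + 1)) from rfl]
    rw [Dder_pow, map_smul, ih, List.map_cons, List.prod_cons, Nat.factorial_succ]
    rw [smul_eq_C_mul, ← C_mul]
    congr 1
    push_cast
    ring

lemma matching {α β : Type*} [DecidableEq α] [DecidableEq β] (c : α → β) (N : ℕ) :
    ∀ (d : ℕ) (S : Finset α), S.card = N → S.card ≤ 2*d →
    (∀ b, (S.filter (fun a => c a = b)).card ≤ d) →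
    ∃ g : α → ℕ, (∀ a ∈ S, g a < d) ∧ (∀ j, (S.filter (fun a => g a = j)).card ≤ 2) ∧
      (∀ a ∈ S, ∀ b ∈ S, a ≠ b → g a = g b → c a ≠ c b) := by
  induction N using Nat.strong_induction_on with
  | _ N ih =>
  intro d S hcard hS hfib
  by_cases hsd : S.card ≤ d
  · -- use singletons
    let e := S.equivFin
    refine ⟨fun a => if h : a ∈ S then (e ⟨a, h⟩ : ℕ) else 0, ?_, ?_, ?_⟩
    · intro a ha
      simp only [dif_pos ha]
      exact lt_of_lt_of_le (e ⟨a, ha⟩).2 hsd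
    · intro j
      refine le_trans (Finset.card_le_one.2 ?_) (by norm_num)
      intro x hx y hy
      simp only [Finset.mem_filter] at hx hy
      obtain ⟨hxS, hxj⟩ := hx
      obtain ⟨hyS, hyj⟩ := hy
      rw [dif_pos hxS] at hxj
      rw [dif_pos hyS] at hyj
      have : e ⟨x, hxS⟩ = e ⟨y, hyS⟩ := Fin.ext (hxj.trans hyj.symm)
      simpa [Subtype.ext_iff] using e.injective this
    · intro x hx y hy hxy hg
      exfalso
      apply hxy
      simp only [dif_pos hx, dif_pos hy] at hg
      have : e ⟨x, hx⟩ = e ⟨y, hy⟩ := Fin.ext hg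
      simpa [Subtype.ext_iff] using e.injective this
  · push_neg at hsd
    have hd1 : 1 ≤ d := by omega
    have hSne : S.Nonempty := Finset.card_pos.1 (by omega)
    obtain ⟨a, ha, hamax⟩ := S.exists_max_image (fun x => (S.filter (fun y => c y = c x)).card) hSne
    have hTne : (S.filter (fun x => c x ≠ c a)).Nonempty := by
      by_contra h
      rw [Finset.not_nonempty_iff_eq_empty, Finset.filter_eq_empty_iff] at h
      have heq : S.filter (fun y => c y = c a) = S := by
        rw [Finset.filter_eq_self]
        intro x hx
        by_contra hne
        exact (h hx) hne
      have := hfib (c a)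
      rw [heq] at this
      omega
    obtain ⟨b, hbT, hbmax⟩ := (S.filter (fun x => c x ≠ c a)).exists_max_image
      (fun x => (S.filter (fun y => c y = c x)).card) hTne
    rw [Finset.mem_filter] at hbT
    obtain ⟨hb, hcb⟩ := hbT
    have hab : a ≠ b := fun h => hcb (by rw [h])
    set S' := (S.erase a).erase b with hS'
    have hbS' : b ∈ S.erase a := Finset.mem_erase.2 ⟨(Ne.symm hab), hb⟩
    have hcard' : S'.card = N - 2 := by
      rw [hS', Finset.card_erase_of_mem hbS', Finset.card_erase_of_mem ha, hcard]
      omega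
    have hmem' : ∀ x, x ∈ S' ↔ (x ∈ S ∧ x ≠ a ∧ x ≠ b) := by
      intro x
      simp only [hS', Finset.mem_erase]
      tauto
    have hfib' : ∀ β0, (S'.filter (fun x => c x = β0)).card ≤ d - 1 := by
      intro β0
      by_cases h1 : β0 = c a
      · have hsub : S'.filter (fun x => c x = β0) ⊆ (S.filter (fun x => c x = β0)).erase a := by
          intro x hx
          rw [Finset.mem_filter, hmem'] at hx
          exact Finset.mem_erase.2 ⟨hx.1.2.1, Finset.mem_filter.2 ⟨hx.1.1, hx.2⟩⟩
        have h2 := Finset.card_le_card hsub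
        rw [Finset.card_erase_of_mem (Finset.mem_filter.2 ⟨ha, h1.symm⟩)] at h2
        have := hfib β0
        omega
      · by_cases h2 : β0 = c b
        · have hsub : S'.filter (fun x => c x = β0) ⊆ (S.filter (fun x => c x = β0)).erase b := by
            intro x hx
            rw [Finset.mem_filter, hmem'] at hx
            exact Finset.mem_erase.2 ⟨hx.1.2.2, Finset.mem_filter.2 ⟨hx.1.1, hx.2⟩⟩
          have h3 := Finset.card_le_card hsub
          rw [Finset.card_erase_of_mem (Finset.mem_filter.2 ⟨hb, h2.symm⟩)] at h3
          have := hfib β0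
          omega
        · have hsub : S'.filter (fun x => c x = β0) ⊆ S.filter (fun x => c x = β0) := by
            intro x hx
            rw [Finset.mem_filter, hmem'] at hx
            exact Finset.mem_filter.2 ⟨hx.1.1, hx.2⟩
          refine le_trans (Finset.card_le_card hsub) ?_
          by_contra hcon
          push_neg at hcon
          have hfd : d ≤ (S.filter (fun x => c x = β0)).card := by omega
          obtain ⟨x, hx⟩ : (S.filter (fun x => c x = β0)).Nonempty := Finset.card_pos.1 (by omega)
          simp only [Finset.mem_filter] at hx
          have hxT : x ∈ S.filter (fun x => c x ≠ c a) :=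
            Finset.mem_filter.2 ⟨hx.1, by rw [hx.2]; exact fun h => h1 h⟩
          have h3 : d ≤ (S.filter (fun y => c y = c b)).card := by
            have h5 := hbmax x hxT
            rw [hx.2] at h5
            omega
          have h4 : d ≤ (S.filter (fun y => c y = c a)).card := by
            have h5 := hamax x hx.1
            rw [hx.2] at h5
            omega
          -- three disjoint fibers inside S
          set F1 := S.filter (fun y => c y = c a) with hF1
          set F2 := S.filter (fun y => c y = c b) with hF2
          set F3 := S.filter (fun y => c y = β0) with hF3
          have hd12 : Disjoint F1 F2 := by
            rw [Finset.disjoint_left]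
            intro y h1y h2y
            rw [hF1, Finset.mem_filter] at h1y
            rw [hF2, Finset.mem_filter] at h2y
            exact hcb (h2y.2.symm.trans h1y.2)
          have hd13 : Disjoint F1 F3 := by
            rw [Finset.disjoint_left]
            intro y h1y h3y
            rw [hF1, Finset.mem_filter] at h1y
            rw [hF3, Finset.mem_filter] at h3y
            exact h1 (h3y.2.symm.trans h1y.2)
          have hd23 : Disjoint F2 F3 := by
            rw [Finset.disjoint_left]
            intro y h2y h3y
            rw [hF2, Finset.mem_filter] at h2y
            rw [hF3, Finset.mem_filter] at h3y
            exact h2 (h3y.2.symm.trans h2y.2)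
          have hsubS : F1 ∪ F2 ∪ F3 ⊆ S := by
            intro y hy
            simp only [Finset.mem_union, hF1, hF2, hF3, Finset.mem_filter] at hy
            tauto
          have hcard3 : (F1 ∪ F2 ∪ F3).card = F1.card + F2.card + F3.card := by
            rw [Finset.card_union_of_disjoint, Finset.card_union_of_disjoint hd12]
            exact Finset.disjoint_union_left.2 ⟨hd13, hd23⟩
          have := Finset.card_le_card hsubS
          rw [hcard3] at this
          omega
    -- apply IH
    obtain ⟨g', hg'1, hg'2, hg'3⟩ := ih (N - 2) (by omega) (d - 1) S' hcard'
      (by omega) hfib'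
    refine ⟨fun x => if x = a ∨ x = b then d - 1 else g' x, ?_, ?_, ?_⟩
    · intro x hx
      by_cases h : x = a ∨ x = b
      · simp only [if_pos h]; omega
      · simp only [if_neg h]
        push_neg at h
        have := hg'1 x ((hmem' x).2 ⟨hx, h.1, h.2⟩)
        omega
    · intro j
      by_cases hj : j = d - 1
      · refine le_trans (Finset.card_le_card (?_ : _ ⊆ ({a, b} : Finset α))) (le_trans (Finset.card_insert_le _ _) (by simp))
        intro x hx
        simp only [Finset.mem_filter] at hx
        by_cases h : x = a ∨ x = b
        · simp only [Finset.mem_insert, Finset.mem_singleton]; exact h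
        · exfalso
          rw [if_neg h] at hx
          push_neg at h
          have := hg'1 x ((hmem' x).2 ⟨hx.1, h.1, h.2⟩)
          omega
      · refine le_trans (Finset.card_le_card (?_ : _ ⊆ S'.filter (fun x => g' x = j))) (hg'2 j)
        intro x hx
        simp only [Finset.mem_filter] at hx
        by_cases h : x = a ∨ x = b
        · exfalso; rw [if_pos h] at hx; exact hj hx.2.symm
        · rw [if_neg h] at hx
          push_neg at h
          exact Finset.mem_filter.2 ⟨(hmem' x).2 ⟨hx.1, h.1, h.2⟩, hx.2⟩
    · intro x hx y hy hxy hg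
      simp only at hg
      by_cases h1 : x = a ∨ x = b
      · by_cases h2 : y = a ∨ y = b
        · -- {x,y} = {a,b}
          rcases h1 with h1 | h1 <;> rcases h2 with h2 | h2 <;> subst h1 <;> subst h2
          · exact absurd rfl hxy
          · exact fun h => hcb h.symm
          · exact fun h => hcb h
          · exact absurd rfl hxy
        · exfalso
          rw [if_pos h1, if_neg h2] at hg
          push_neg at h2
          have := hg'1 y ((hmem' y).2 ⟨hy, h2.1, h2.2⟩)
          omega
      · by_cases h2 : y = a ∨ y = b
        · exfalso
          rw [if_neg h1, if_pos h2] at hg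
          push_neg at h1
          have := hg'1 x ((hmem' x).2 ⟨hx, h1.1, h1.2⟩)
          omega
        · rw [if_neg h1, if_neg h2] at hg
          push_neg at h1
          push_neg at h2
          exact hg'3 x ((hmem' x).2 ⟨hx, h1.1, h1.2⟩) y ((hmem' y).2 ⟨hy, h2.1, h2.2⟩) hxy hg

open Projectivization Module

variable {V : Type*} [AddCommGroup V] [Module ℂ V]

lemma rep_mem_submodule (p : Projectivization ℂ V) : p.rep ∈ p.submodule := by
  rw [submodule_eq]
  exact Submodule.mem_span_singleton_self _

lemma submodule_le_iff (p : Projectivization ℂ V) (W : Submodule ℂ V) :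
    p.submodule ≤ W ↔ p.rep ∈ W := by
  rw [submodule_eq, Submodule.span_singleton_le_iff_mem]

lemma rep_not_mem_submodule {p q : Projectivization ℂ V} (h : p ≠ q) : p.rep ∉ q.submodule := by
  intro hmem
  rw [← submodule_le_iff] at hmem
  have : p.submodule = q.submodule := by
    apply Submodule.eq_of_le_of_finrank_le hmem
    rw [finrank_submodule, finrank_submodule]
  exact h (Projectivization.submodule_injective this)

lemma inf_submodule_eq_bot {p q : Projectivization ℂ V} (h : p ≠ q) :
    p.submodule ⊓ q.submodule = ⊥ := by
  by_contra hne
  have h1 : finrank ℂ (p.submodule ⊓ q.submodule : Submodule ℂ V) ≤ 1 := by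
    have := Submodule.finrank_mono (inf_le_left : p.submodule ⊓ q.submodule ≤ p.submodule)
    rwa [finrank_submodule] at this
  have h2 : 1 ≤ finrank ℂ (p.submodule ⊓ q.submodule : Submodule ℂ V) := by
    rw [Nat.one_le_iff_ne_zero]
    intro h0
    have : FiniteDimensional ℂ (p.submodule ⊓ q.submodule : Submodule ℂ V) :=
      Submodule.finiteDimensional_of_le inf_le_left
    exact hne (Submodule.finrank_eq_zero.1 h0)
  have heq1 : p.submodule ⊓ q.submodule = p.submodule := by
    apply Submodule.eq_of_le_of_finrank_le inf_le_left
    rw [finrank_submodule]; omega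
  have heq2 : p.submodule ⊓ q.submodule = q.submodule := by
    apply Submodule.eq_of_le_of_finrank_le inf_le_right
    rw [finrank_submodule]; omega
  exact h (Projectivization.submodule_injective (heq1.symm.trans heq2))

lemma finrank_sup_eq_two {p q : Projectivization ℂ V} (h : p ≠ q) :
    finrank ℂ (p.submodule ⊔ q.submodule : Submodule ℂ V) = 2 := by
  have : FiniteDimensional ℂ (p.submodule : Submodule ℂ V) := inferInstance
  have := Submodule.finrank_sup_add_finrank_inf_eq p.submodule q.submodule
  rw [inf_submodule_eq_bot h, finrank_submodule, finrank_submodule, finrank_bot] at this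
  omega

/-- key geometric step: if `p ∉ line(x,y)` fails, the lines `p ∨ x` and `p ∨ y` agree. -/
lemma line_eq_of_mem {p x y : Projectivization ℂ V} (hpx : p ≠ x) (hpy : p ≠ y) (hxy : x ≠ y)
    (hmem : p.rep ∈ (x.submodule ⊔ y.submodule : Submodule ℂ V)) :
    p.submodule ⊔ x.submodule = p.submodule ⊔ y.submodule := by
  have hW : finrank ℂ (x.submodule ⊔ y.submodule : Submodule ℂ V) = 2 := finrank_sup_eq_two hxy
  have hx : p.submodule ⊔ x.submodule = x.submodule ⊔ y.submodule := by
    apply Submodule.eq_of_le_of_finrank_le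
    · apply sup_le
      · rw [submodule_le_iff]; exact hmem
      · exact le_sup_left
    · rw [hW, finrank_sup_eq_two hpx]
  have hy : p.submodule ⊔ y.submodule = x.submodule ⊔ y.submodule := by
    apply Submodule.eq_of_le_of_finrank_le
    · apply sup_le
      · rw [submodule_le_iff]; exact hmem
      · exact le_sup_right
    · rw [hW, finrank_sup_eq_two hpy]
  rw [hx, hy]

lemma exists_functional {p : Projectivization ℂ V} (F : Finset (Projectivization ℂ V))
    (hcard : F.card ≤ 2) (hp : p ∉ F)
    (htrans : ∀ x ∈ F, ∀ y ∈ F, x ≠ y →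
      p.submodule ⊔ x.submodule ≠ p.submodule ⊔ y.submodule) :
    ∃ φ : Module.Dual ℂ V, φ p.rep ≠ 0 ∧ ∀ q ∈ F, φ q.rep = 0 := by
  classical
  have hW : ∃ W : Submodule ℂ V, p.rep ∉ W ∧ ∀ q ∈ F, q.rep ∈ W := by
    interval_cases h : F.card
    · refine ⟨⊥, ?_, ?_⟩
      · simp [Projectivization.rep_nonzero]
      · intro q hq
        rw [Finset.card_eq_zero.1 h] at hq
        simp at hq
    · obtain ⟨x, hx⟩ := Finset.card_eq_one.1 h
      subst hx
      have hpx : p ≠ x := by rintro rfl; simp at hp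
      refine ⟨x.submodule, rep_not_mem_submodule hpx, ?_⟩
      intro q hq
      rw [Finset.mem_singleton] at hq
      subst hq
      exact rep_mem_submodule q
    · obtain ⟨x, y, hxy, hF⟩ := Finset.card_eq_two.1 h
      subst hF
      have hpx : p ≠ x := by rintro rfl; simp at hp
      have hpy : p ≠ y := by rintro rfl; simp at hp
      refine ⟨x.submodule ⊔ y.submodule, ?_, ?_⟩
      · intro hmem
        exact htrans x (by simp) y (by simp) hxy (line_eq_of_mem hpx hpy hxy hmem)
      · intro q hq
        rcases Finset.mem_insert.1 hq with rfl | hq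
        · exact Submodule.mem_sup_left (rep_mem_submodule q)
        · rw [Finset.mem_singleton] at hq
          subst hq
          exact Submodule.mem_sup_right (rep_mem_submodule q)
  obtain ⟨W, hpW, hFW⟩ := hW
  obtain ⟨f, hf1, hf2⟩ := Submodule.exists_dual_map_eq_bot_of_notMem hpW inferInstance
  refine ⟨f, hf1, fun q hq => ?_⟩
  have : f q.rep ∈ W.map f := Submodule.mem_map_of_mem (hFW q hq)
  rw [hf2] at this
  simpa using this


section Main

open Projectivization Module

theorem line_of_dependent_points {m d : ℕ}
    (Z : Finset (Projectivization ℂ (Fin (m + 1) → ℂ)))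
    (hZ : Z.card ≤ 2 * d + 1)
    (hdep : ¬ LinearIndependent ℂ (fun p : ↥Z => nu d p.1)) :
    ∃ W : Submodule ℂ (Fin (m + 1) → ℂ), Module.finrank ℂ W = 2 ∧
      d + 2 ≤ {p : Projectivization ℂ (Fin (m + 1) → ℂ) | p ∈ Z ∧ p.submodule ≤ W}.ncard := by
  classical
  by_contra hcon
  push_neg at hcon
  apply hdep
  rw [Fintype.linearIndependent_iff]
  intro g0 hsum i
  set p := i.1 with hpdef
  have hpZ : p ∈ Z := i.2
  set S := Z.erase p with hSdef
  have hScard : S.card ≤ 2 * d := by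
    rw [hSdef, Finset.card_erase_of_mem hpZ]
    have : 1 ≤ Z.card := Finset.card_pos.2 ⟨p, hpZ⟩
    omega
  set c : Projectivization ℂ (Fin (m+1) → ℂ) → Submodule ℂ (Fin (m+1) → ℂ) :=
    fun q => p.submodule ⊔ q.submodule with hc
  have hfib : ∀ W, (S.filter (fun a => c a = W)).card ≤ d := by
    intro W
    by_cases hne : (S.filter (fun a => c a = W)).Nonempty
    · obtain ⟨q, hq⟩ := hne
      simp only [Finset.mem_filter] at hq
      obtain ⟨hqS, hqW⟩ := hq
      have hqZ : q ∈ Z := Finset.mem_of_mem_erase hqS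
      have hqp : q ≠ p := Finset.ne_of_mem_erase hqS
      have hfr : finrank ℂ W = 2 := by
        rw [← hqW]
        exact finrank_sup_eq_two (Ne.symm hqp)
      have hbound := hcon W hfr
      have hset : {r : Projectivization ℂ (Fin (m+1) → ℂ) | r ∈ Z ∧ r.submodule ≤ W} =
          ↑(Z.filter (fun r => r.submodule ≤ W)) := by
        ext r; simp
      rw [hset, Set.ncard_coe_finset] at hbound
      have hsub : S.filter (fun a => c a = W) ⊆ (Z.filter (fun r => r.submodule ≤ W)).erase p := by
        intro r hr
        simp only [Finset.mem_filter, hSdef, Finset.mem_erase] at hr ⊢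
        obtain ⟨⟨hrp, hrZ⟩, hrW⟩ := hr
        exact ⟨hrp, hrZ, by rw [← hrW]; exact le_sup_right⟩
      have hpmem : p ∈ Z.filter (fun r => r.submodule ≤ W) :=
        Finset.mem_filter.2 ⟨hpZ, by rw [← hqW]; exact le_sup_left⟩
      have hcc := Finset.card_le_card hsub
      rw [Finset.card_erase_of_mem hpmem] at hcc
      omega
    · rw [Finset.not_nonempty_iff_eq_empty] at hne
      rw [hne]
      simp
  obtain ⟨g, hg1, hg2, hg3⟩ := matching c S.card d S rfl hScard hfib
  have hfun : ∀ j : ℕ, ∃ φ : Module.Dual ℂ (Fin (m+1) → ℂ),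
      φ p.rep ≠ 0 ∧ ∀ q ∈ S.filter (fun a => g a = j), φ q.rep = 0 := by
    intro j
    apply exists_functional (p := p) _ (hg2 j)
    · intro hmem
      have := Finset.mem_of_mem_filter p hmem
      rw [hSdef] at this
      exact (Finset.ne_of_mem_erase this) rfl
    · intro x hx y hy hxy
      simp only [Finset.mem_filter] at hx hy
      exact hg3 x hx.1 y hy.1 hxy (hx.2.trans hy.2.symm)
  choose φ hφ1 hφ2 using hfun
  set L : List (Module.Dual ℂ (Fin (m+1) → ℂ)) := (List.range d).map φ with hL
  have hLlen : L.length = d := by simp [hL]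
  have happ : ∀ q : Projectivization ℂ (Fin (m+1) → ℂ),
      applyList L (nu d q) =
        C ((Nat.factorial d : ℂ) * ((List.range d).map (fun j => φ j q.rep)).prod) := by
    intro q
    have h := applyList_pow L q.rep
    rw [hLlen] at h
    rw [show nu d q = linForm q.rep ^ d from rfl, h, hL, List.map_map]
    rfl
  have h0 := congrArg (applyList L) hsum
  rw [map_sum, map_zero] at h0
  simp only [map_smul, happ] at h0
  have h1 : ∑ q : ↥Z,
      g0 q * ((Nat.factorial d : ℂ) * ((List.range d).map (fun j => φ j (q.1).rep)).prod) = 0 := by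
    have h2 := congrArg constantCoeff h0
    rw [map_sum, map_zero] at h2
    simp only [smul_eq_C_mul, ← C_mul, constantCoeff_C] at h2
    exact h2
  rw [Fintype.sum_eq_single i ?van] at h1
  case van =>
    intro q hq
    have hq1 : q.1 ∈ S := by
      rw [hSdef, Finset.mem_erase]
      exact ⟨fun h => hq (Subtype.ext (h.trans hpdef.symm)), q.2⟩
    have hzero : φ (g q.1) (q.1).rep = 0 :=
      hφ2 (g q.1) q.1 (Finset.mem_filter.2 ⟨hq1, rfl⟩)
    have hmem : (0 : ℂ) ∈ (List.range d).map (fun j => φ j (q.1).rep) := by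
      rw [List.mem_map]
      exact ⟨g q.1, List.mem_range.2 (hg1 q.1 hq1), hzero⟩
    rw [List.prod_eq_zero hmem]
    ring
  have hprod : ((List.range d).map (fun j => φ j p.rep)).prod ≠ 0 := by
    apply List.prod_ne_zero
    intro h0'
    rw [List.mem_map] at h0'
    obtain ⟨j, _, hj⟩ := h0'
    exact hφ1 j hj
  have hfact : (Nat.factorial d : ℂ) ≠ 0 := by
    exact_mod_cast Nat.cast_ne_zero.2 (Nat.factorial_ne_zero d)
  rcases mul_eq_zero.1 h1 with h | h
  · exact h
  · exact absurd h (mul_ne_zero hfact hprod)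

end Main
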